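/- Let h_1, …, h_n ∈ ℝ^d, W ∈ ℝ^{d'×d}, a_1, a_2 ∈ ℝ^{d'}, and let e be the GAT scoring function. Define the attention coefficients α_{ij} = exp(e(h_i, h_j)) / Σ_{j'=1}^{n} exp(e(h_i, h_{j'})). Then there exists an index j_max ∈ {1, …, n} such that for every i ∈ {1,…,n} and every j ∈ {1,…,n}, α_{i, j_max} ≥ α_{i, j}; that is, the softmax-normalized GAT attention function computes only static attention. -/

import Mathlib

open Matrix

/-- LeakyReLU with slope `c`. -/
noncomputable def leakyReLU (c x : ℝ) : ℝ := max x (c * x)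

lemma leakyReLU_mono {c : ℝ} (hc : 0 ≤ c) : Monotone (leakyReLU c) := by
  intro x y hxy
  exact max_le_max hxy (mul_le_mul_of_nonneg_left hxy hc)

/-- The GAT scoring function `e(q,k) = LeakyReLU_c(a₁ᵀ(Wq) + a₂ᵀ(Wk))`. -/
noncomputable def gatScore {d d' : ℕ} (c : ℝ) (W : Matrix (Fin d') (Fin d) ℝ)
    (a₁ a₂ : Fin d' → ℝ) (q k : Fin d → ℝ) : ℝ :=
  leakyReLU c (a₁ ⬝ᵥ W.mulVec q + a₂ ⬝ᵥ W.mulVec k)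

/-- The softmax-normalized GAT attention coefficients compute only static attention:
there is a key `jmax` whose attention coefficient is maximal for every query. -/
theorem gat_softmax_static_attention {d d' n : ℕ} (hn : 0 < n)
    (c : ℝ) (hc0 : 0 < c) (hc1 : c < 1)
    (h : Fin n → Fin d → ℝ) (W : Matrix (Fin d') (Fin d) ℝ) (a₁ a₂ : Fin d' → ℝ)
    (α : Fin n → Fin n → ℝ)
    (hα : ∀ i j, α i j = Real.exp (gatScore c W a₁ a₂ (h i) (h j)) /
      ∑ j' : Fin n, Real.exp (gatScore c W a₁ a₂ (h i) (h j'))) :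
    ∃ jmax : Fin n, ∀ i j : Fin n, α i jmax ≥ α i j := by
  haveI : Nonempty (Fin n) := ⟨⟨0, hn⟩⟩
  obtain ⟨jmax, _, hjmax⟩ := Finset.exists_max_image Finset.univ
    (fun j => a₂ ⬝ᵥ W.mulVec (h j)) Finset.univ_nonempty
  refine ⟨jmax, fun i j => ?_⟩
  rw [hα, hα]
  have hden : 0 < ∑ j' : Fin n, Real.exp (gatScore c W a₁ a₂ (h i) (h j')) :=
    Finset.sum_pos (fun _ _ => Real.exp_pos _) Finset.univ_nonempty
  exact div_le_div_of_nonneg_right (Real.exp_le_exp.mpr (leakyReLU_mono hc0.le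
      (add_le_add_right (hjmax j (Finset.mem_univ j)) _))) hden.le
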